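/- Every real B-Nekrasov matrix is a P-matrix, i.e., all of its principal minors are positive. -/

import Mathlib

open Finset

noncomputable def nekH {n : ℕ} {𝕜 : Type*} [RCLike 𝕜] (A : Matrix (Fin n) (Fin n) 𝕜) : Fin n → ℝ
  | i =>
    (∑ j : Fin n, if h : j < i then ‖A i j‖ / ‖A j j‖ * nekH A j else 0)
      + ∑ j : Fin n, if i < j then ‖A i j‖ else 0
termination_by i => i.val
decreasing_by exact h

def IsNekrasov {n : ℕ} {𝕜 : Type*} [RCLike 𝕜] (A : Matrix (Fin n) (Fin n) 𝕜) : Prop :=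
  ∀ i, nekH A i < ‖A i i‖

noncomputable def nekZ {n : ℕ} {𝕜 : Type*} [RCLike 𝕜] (A : Matrix (Fin n) (Fin n) 𝕜) : Fin n → ℝ
  | i => (∑ j : Fin n, if h : j < i then ‖A i j‖ / ‖A j j‖ * nekZ A j else 0) + 1
termination_by i => i.val
decreasing_by exact h

noncomputable def nekEta {n : ℕ} {𝕜 : Type*} [RCLike 𝕜] (M : Matrix (Fin n) (Fin n) 𝕜) : Fin n → ℝ
  | i => (∑ j : Fin n, if h : j < i then ‖M i j‖ / min ‖M j j‖ 1 * nekEta M j else 0) + 1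
termination_by i => i.val
decreasing_by exact h

noncomputable def linftyNorm {n : ℕ} {𝕜 : Type*} [RCLike 𝕜] (A : Matrix (Fin n) (Fin n) 𝕜) : ℝ :=
  ⨆ i, ∑ j, ‖A i j‖

noncomputable def rPlus {n : ℕ} (M : Matrix (Fin n) (Fin n) ℝ) (i : Fin n) : ℝ :=
  Finset.fold max 0 (fun j => M i j) (Finset.univ.erase i)

noncomputable def BPlus {n : ℕ} (M : Matrix (Fin n) (Fin n) ℝ) : Matrix (Fin n) (Fin n) ℝ :=
  Matrix.of fun i j => M i j - rPlus M i

def IsBNekrasov {n : ℕ} (M : Matrix (Fin n) (Fin n) ℝ) : Prop :=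
  IsNekrasov (BPlus M) ∧ ∀ i, 0 < BPlus M i i

def IsLCPSolution {n : ℕ} (M : Matrix (Fin n) (Fin n) ℝ) (q x : Fin n → ℝ) : Prop :=
  (∀ i, 0 ≤ x i) ∧ (∀ i, 0 ≤ (M.mulVec x + q) i) ∧ ∑ i, (M.mulVec x + q) i * x i = 0

def IsPMatrix {n : ℕ} (M : Matrix (Fin n) (Fin n) ℝ) : Prop :=
  ∀ S : Finset (Fin n), 0 < (M.submatrix (fun i : S => (i : Fin n)) (fun j : S => (j : Fin n))).det



theorem finStrongInd {n : ℕ} {P : Fin n → Prop}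
    (h : ∀ i : Fin n, (∀ j : Fin n, j < i → P j) → P i) : ∀ i, P i
  | i => WellFoundedLT.induction i h

theorem nekH_eq {n : ℕ} {𝕜 : Type*} [RCLike 𝕜] (A : Matrix (Fin n) (Fin n) 𝕜) (i : Fin n) :
    nekH A i = (∑ j : Fin n, if j < i then ‖A i j‖ / ‖A j j‖ * nekH A j else 0)
      + ∑ j : Fin n, if i < j then ‖A i j‖ else 0 := by
  rw [nekH]; simp only [dite_eq_ite]

theorem nekZ_eq {n : ℕ} {𝕜 : Type*} [RCLike 𝕜] (A : Matrix (Fin n) (Fin n) 𝕜) (i : Fin n) :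
    nekZ A i = (∑ j : Fin n, if j < i then ‖A i j‖ / ‖A j j‖ * nekZ A j else 0) + 1 := by
  rw [nekZ]; simp only [dite_eq_ite]

theorem nekH_nonneg {n : ℕ} {𝕜 : Type*} [RCLike 𝕜] (A : Matrix (Fin n) (Fin n) 𝕜) :
    ∀ i, 0 ≤ nekH A i := by
  refine finStrongInd fun i ih => ?_
  rw [nekH_eq]
  have h1 : (0:ℝ) ≤ ∑ j : Fin n, if j < i then ‖A i j‖ / ‖A j j‖ * nekH A j else 0 := by
    refine Finset.sum_nonneg fun j _ => ?_
    split
    · exact mul_nonneg (div_nonneg (norm_nonneg _) (norm_nonneg _)) (ih j (by assumption))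
    · exact le_rfl
  have h2 : (0:ℝ) ≤ ∑ j : Fin n, if i < j then ‖A i j‖ else 0 := by
    refine Finset.sum_nonneg fun j _ => ?_
    split
    · exact norm_nonneg _
    · exact le_rfl
  linarith

theorem nekZ_one_le {n : ℕ} {𝕜 : Type*} [RCLike 𝕜] (A : Matrix (Fin n) (Fin n) 𝕜) :
    ∀ i, 1 ≤ nekZ A i := by
  refine finStrongInd fun i ih => ?_
  rw [nekZ_eq]
  have h1 : (0:ℝ) ≤ ∑ j : Fin n, if j < i then ‖A i j‖ / ‖A j j‖ * nekZ A j else 0 := by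
    refine Finset.sum_nonneg fun j _ => ?_
    split
    · exact mul_nonneg (div_nonneg (norm_nonneg _) (norm_nonneg _))
        (le_trans zero_le_one (ih j (by assumption)))
    · exact le_rfl
  linarith

theorem diag_norm_pos {n : ℕ} {𝕜 : Type*} [RCLike 𝕜] {A : Matrix (Fin n) (Fin n) 𝕜}
    (hA : IsNekrasov A) (j : Fin n) : 0 < ‖A j j‖ :=
  lt_of_le_of_lt (nekH_nonneg A j) (hA j)

theorem sum_erase_split {n : ℕ} (f : Fin n → ℝ) (i : Fin n) :
    ∑ j ∈ univ.erase i, f j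
      = (∑ j : Fin n, if j < i then f j else 0) + ∑ j : Fin n, if i < j then f j else 0 := by
  rw [Finset.sum_erase_eq_sub (mem_univ i), ← Finset.sum_add_distrib]
  have : ∀ j : Fin n, ((if j < i then f j else 0) + if i < j then f j else 0)
      = f j - (if j = i then f j else 0) := by
    intro j
    rcases lt_trichotomy j i with h | h | h
    · simp [h, asymm h, ne_of_lt h]
    · simp [h]
    · simp [h, asymm h, (ne_of_lt h).symm]
  rw [Finset.sum_congr rfl fun j _ => this j, Finset.sum_sub_distrib,
    Finset.sum_ite_eq' univ i f]
  simp

theorem nekH_mono {n : ℕ} (A A' : Matrix (Fin n) (Fin n) ℝ)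
    (hdpos : ∀ j, 0 < ‖A j j‖) (hdle : ∀ j, ‖A j j‖ ≤ ‖A' j j‖)
    (hoff : ∀ i j, i ≠ j → ‖A' i j‖ ≤ ‖A i j‖) : ∀ i, nekH A' i ≤ nekH A i := by
  refine finStrongInd fun i ih => ?_
  rw [nekH_eq, nekH_eq]
  refine add_le_add (Finset.sum_le_sum fun j _ => ?_) (Finset.sum_le_sum fun j _ => ?_)
  · split
    · next h =>
      refine mul_le_mul ?_ (ih j h) (nekH_nonneg _ _) (div_nonneg (norm_nonneg _) (norm_nonneg _))
      exact div_le_div₀ (norm_nonneg _) (hoff i j h.ne') (hdpos j) (hdle j)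
    · exact le_rfl
  · split
    · next h => exact hoff i j h.ne
    · exact le_rfl

private theorem sum_emb_le {n m : ℕ} (e : Fin m → Fin n) (he : Function.Injective e)
    (p : Fin m → Prop) (q : Fin n → Prop) [DecidablePred p] [DecidablePred q]
    (hpq : ∀ l, p l → q (e l)) (F : Fin n → ℝ) (hF : ∀ j, 0 ≤ F j) :
    ∑ l : Fin m, (if p l then F (e l) else 0) ≤ ∑ j : Fin n, if q j then F j else 0 := by
  rw [← Finset.sum_filter, ← Finset.sum_filter,
    ← Finset.sum_image (f := F) (g := e) (fun x _ y _ h => he h)]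
  refine Finset.sum_le_sum_of_subset_of_nonneg ?_ (fun j _ _ => hF j)
  intro j hj
  simp only [Finset.mem_image, Finset.mem_filter, Finset.mem_univ, true_and] at hj ⊢
  obtain ⟨l, hl, rfl⟩ := hj
  exact hpq l hl

theorem nekH_submatrix {n m : ℕ} (A : Matrix (Fin n) (Fin n) ℝ) (e : Fin m → Fin n)
    (he : StrictMono e) : ∀ k, nekH (A.submatrix e e) k ≤ nekH A (e k) := by
  refine finStrongInd fun k ih => ?_
  rw [nekH_eq, nekH_eq]
  refine add_le_add ?_ ?_
  · have step1 : ∑ l : Fin m, (if l < k then ‖A.submatrix e e k l‖ / ‖A.submatrix e e l l‖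
        * nekH (A.submatrix e e) l else 0)
        ≤ ∑ l : Fin m, (if l < k then ‖A (e k) (e l)‖ / ‖A (e l) (e l)‖ * nekH A (e l) else 0) := by
      refine Finset.sum_le_sum fun l _ => ?_
      split
      · next h =>
        exact mul_le_mul_of_nonneg_left (ih l h) (div_nonneg (norm_nonneg _) (norm_nonneg _))
      · exact le_rfl
    refine step1.trans ?_
    exact sum_emb_le e he.injective (· < k) (· < e k) (fun l hl => he hl)
      (fun j => ‖A (e k) j‖ / ‖A j j‖ * nekH A j)
      (fun j => mul_nonneg (div_nonneg (norm_nonneg _) (norm_nonneg _)) (nekH_nonneg _ _))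
  · exact sum_emb_le e he.injective (k < ·) (e k < ·) (fun l hl => he hl)
      (fun j => ‖A (e k) j‖) (fun j => norm_nonneg _)

theorem nekrasov_scaling {n : ℕ} (A : Matrix (Fin n) (Fin n) ℝ) (hA : IsNekrasov A) :
    ∃ d : Fin n → ℝ, (∀ j, 0 < d j) ∧ (∀ j, d j ≤ 1) ∧
      ∀ i, ∑ j ∈ univ.erase i, ‖A i j‖ * d j < ‖A i i‖ * d i := by
  rcases Nat.eq_zero_or_pos n with hn | hn
  · subst hn
    exact ⟨fun _ => 1, fun i => i.elim0, fun i => i.elim0, fun i => i.elim0⟩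
  haveI : Nonempty (Fin n) := ⟨⟨0, hn⟩⟩
  set ε : ℝ := univ.inf' univ_nonempty (fun j => (‖A j j‖ - nekH A j) / nekZ A j) with hε_def
  have hzpos : ∀ j, (0:ℝ) < nekZ A j := fun j => lt_of_lt_of_le one_pos (nekZ_one_le A j)
  have hε : 0 < ε := by
    rw [hε_def, Finset.lt_inf'_iff]
    exact fun j _ => div_pos (sub_pos.mpr (hA j)) (hzpos j)
  have hεle : ∀ j, ε * nekZ A j ≤ ‖A j j‖ - nekH A j := by
    intro j
    have := Finset.inf'_le (fun j => (‖A j j‖ - nekH A j) / nekZ A j) (mem_univ j)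
    rw [← hε_def] at this
    calc ε * nekZ A j ≤ ((‖A j j‖ - nekH A j) / nekZ A j) * nekZ A j :=
          mul_le_mul_of_nonneg_right this (hzpos j).le
      _ = ‖A j j‖ - nekH A j := div_mul_cancel₀ _ (hzpos j).ne'
  have hapos := diag_norm_pos hA
  refine ⟨fun j => (nekH A j + ε * nekZ A j) / ‖A j j‖, ?_, ?_, ?_⟩
  · intro j
    exact div_pos (add_pos_of_nonneg_of_pos (nekH_nonneg A j) (mul_pos hε (hzpos j))) (hapos j)
  · intro j
    rw [div_le_one (hapos j)]
    linarith [hεle j]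
  · intro i
    set d : Fin n → ℝ := fun j => (nekH A j + ε * nekZ A j) / ‖A j j‖ with hd_def
    have hdle1 : ∀ j, d j ≤ 1 := by
      intro j
      rw [hd_def, div_le_one (hapos j)]
      linarith [hεle j]
    rw [sum_erase_split (fun j => ‖A i j‖ * d j) i]
    have partA : (∑ j : Fin n, if j < i then ‖A i j‖ * d j else 0)
        = (∑ j : Fin n, if j < i then ‖A i j‖ / ‖A j j‖ * nekH A j else 0)
          + ε * ∑ j : Fin n, if j < i then ‖A i j‖ / ‖A j j‖ * nekZ A j else 0 := by
      rw [Finset.mul_sum, ← Finset.sum_add_distrib]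
      refine Finset.sum_congr rfl fun j _ => ?_
      split
      · have ha : ‖A j j‖ ≠ 0 := (hapos j).ne'
        rw [hd_def]
        field_simp
      · simp
    have partB : (∑ j : Fin n, if i < j then ‖A i j‖ * d j else 0)
        ≤ ∑ j : Fin n, if i < j then ‖A i j‖ else 0 := by
      refine Finset.sum_le_sum fun j _ => ?_
      split
      · calc ‖A i j‖ * d j ≤ ‖A i j‖ * 1 :=
              mul_le_mul_of_nonneg_left (hdle1 j) (norm_nonneg _)
          _ = ‖A i j‖ := mul_one _
      · exact le_rfl
    have hz := nekZ_eq A i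
    have hh := nekH_eq A i
    have hrhs : ‖A i i‖ * d i = nekH A i + ε * nekZ A i := by
      rw [hd_def, mul_comm, div_mul_cancel₀ _ (hapos i).ne']
    rw [hrhs, partA]
    have : (∑ j : Fin n, if j < i then ‖A i j‖ / ‖A j j‖ * nekZ A j else 0) = nekZ A i - 1 := by
      linarith [hz]
    rw [this]
    have hle : (∑ j : Fin n, if j < i then ‖A i j‖ / ‖A j j‖ * nekH A j else 0)
        + (∑ j : Fin n, if i < j then ‖A i j‖ else 0) = nekH A i := hh.symm
    nlinarith [partB, hε]

theorem nek_inv_pos {n : ℕ} (B : Matrix (Fin n) (Fin n) ℝ)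
    (hZ : ∀ i j, i ≠ j → B i j ≤ 0) (hdiag : ∀ i, 0 < B i i) (hN : IsNekrasov B)
    (x : Fin n → ℝ) (hx : ∀ i, 0 ≤ B.mulVec x i) : ∀ i, 0 ≤ x i := by
  obtain ⟨d, hdpos, _, hsdd⟩ := nekrasov_scaling B hN
  by_contra hcon
  push_neg at hcon
  obtain ⟨i₀, hi₀⟩ := hcon
  haveI : Nonempty (Fin n) := ⟨i₀⟩
  obtain ⟨i, -, hi⟩ := Finset.exists_min_image univ (fun j => x j / d j) univ_nonempty
  have hmin : ∀ j, x i / d i ≤ x j / d j := fun j => hi j (mem_univ j)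
  have hineg : x i / d i < 0 :=
    lt_of_le_of_lt (hmin i₀) (div_neg_of_neg_of_pos hi₀ (hdpos i₀))
  have key : ∀ j, B i j * x j ≤ (B i j * d j) * (x i / d i) := by
    intro j
    rcases eq_or_ne j i with rfl | hne
    · rw [mul_assoc, mul_div_cancel₀ _ (hdpos j).ne']
    · have hxj : (x i / d i) * d j ≤ x j := by
        have := hmin j
        calc (x i / d i) * d j ≤ (x j / d j) * d j :=
              mul_le_mul_of_nonneg_right this (hdpos j).le
          _ = x j := div_mul_cancel₀ _ (hdpos j).ne'
      have hB : B i j ≤ 0 := hZ i j hne.symm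
      nlinarith
  have hsum : B.mulVec x i ≤ (∑ j, B i j * d j) * (x i / d i) := by
    rw [Matrix.mulVec, dotProduct, Finset.sum_mul]
    exact Finset.sum_le_sum fun j _ => key j
  have hpos : 0 < ∑ j, B i j * d j := by
    have hsplit : ∑ j, B i j * d j = B i i * d i + ∑ j ∈ univ.erase i, B i j * d j :=
      (Finset.add_sum_erase univ _ (mem_univ i)).symm
    have hge : -(∑ j ∈ univ.erase i, ‖B i j‖ * d j) ≤ ∑ j ∈ univ.erase i, B i j * d j := by
      rw [← Finset.sum_neg_distrib]
      refine Finset.sum_le_sum fun j _ => ?_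
      have : -‖B i j‖ ≤ B i j := neg_abs_le _
      nlinarith [hdpos j]
    have h1 := hsdd i
    have h2 : ‖B i i‖ = B i i := abs_of_pos (hdiag i)
    rw [hsplit]
    rw [h2] at h1
    linarith
  have : B.mulVec x i < 0 := lt_of_le_of_lt hsum (mul_neg_of_pos_of_neg hpos hineg)
  exact absurd (hx i) (not_le.mpr this)

theorem bnek_mulVec_zero {n : ℕ} (B : Matrix (Fin n) (Fin n) ℝ)
    (hZ : ∀ i j, i ≠ j → B i j ≤ 0) (hdiag : ∀ i, 0 < B i i) (hN : IsNekrasov B)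
    (c : Fin n → ℝ) (hc : ∀ i, 0 ≤ c i) (x : Fin n → ℝ)
    (hx : ∀ i, B.mulVec x i + (∑ j, x j) * c i = 0) : x = 0 := by
  set σ := ∑ j, x j with hσ
  have hmv : ∀ i, B.mulVec x i = -(σ * c i) := fun i => by linarith [hx i]
  have hneg : ∀ i, B.mulVec (-x) i = σ * c i := by
    intro i; rw [Matrix.mulVec_neg]; simp [hmv i]
  rcases lt_trichotomy σ 0 with h | h | h
  · have hxpos : ∀ i, 0 ≤ x i := by
      refine nek_inv_pos B hZ hdiag hN x fun i => ?_
      rw [hmv i]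
      nlinarith [hc i]
    have : 0 ≤ σ := Finset.sum_nonneg fun j _ => hxpos j
    linarith
  · have h1 : ∀ i, 0 ≤ x i := by
      refine nek_inv_pos B hZ hdiag hN x fun i => ?_
      rw [hmv i, h]; simp
    have h2 : ∀ i, 0 ≤ (-x) i := by
      refine nek_inv_pos B hZ hdiag hN (-x) fun i => ?_
      rw [hneg i, h]; simp
    funext i
    have := h1 i
    have := h2 i
    simp only [Pi.neg_apply, Pi.zero_apply] at *
    linarith
  · have hxneg : ∀ i, 0 ≤ (-x) i := by
      refine nek_inv_pos B hZ hdiag hN (-x) fun i => ?_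
      rw [hneg i]
      nlinarith [hc i]
    have : σ ≤ 0 := Finset.sum_nonpos fun j _ => by
      have := hxneg j; simp only [Pi.neg_apply] at this; linarith
    linarith

theorem bnek_det_pos {n : ℕ} (B : Matrix (Fin n) (Fin n) ℝ)
    (hZ : ∀ i j, i ≠ j → B i j ≤ 0) (hdiag : ∀ i, 0 < B i i) (hN : IsNekrasov B)
    (c : Fin n → ℝ) (hc : ∀ i, 0 ≤ c i) :
    0 < Matrix.det (Matrix.of fun i j => B i j + c i) := by
  set G : ℝ → Matrix (Fin n) (Fin n) ℝ :=
    fun t => Matrix.of fun i j => (if i = j then B i i else t * B i j) + t * c i with hG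
  have hcont : Continuous fun t => (G t).det := by
    refine Continuous.matrix_det ?_
    refine continuous_pi fun i => continuous_pi fun j => ?_
    rcases eq_or_ne i j with h | h
    · simp only [hG, Matrix.of_apply, if_pos h]; fun_prop
    · simp only [hG, Matrix.of_apply, if_neg h]; fun_prop
  have hG0 : G 0 = Matrix.diagonal fun i => B i i := by
    ext i j
    rcases eq_or_ne i j with rfl | hne
    · simp [hG, Matrix.diagonal]
    · simp [hG, Matrix.diagonal, hne, Matrix.diagonal_apply_ne _ hne]
  have hf0 : 0 < (G 0).det := by
    rw [hG0, Matrix.det_diagonal]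
    exact Finset.prod_pos fun i _ => hdiag i
  have hne : ∀ t ∈ Set.Icc (0:ℝ) 1, (G t).det ≠ 0 := by
    intro t ht hdet
    obtain ⟨v, hv, hmv⟩ := (Matrix.exists_mulVec_eq_zero_iff).mpr hdet
    set Bt : Matrix (Fin n) (Fin n) ℝ :=
      Matrix.of fun i j => if i = j then B i i else t * B i j with hBt
    have hBtZ : ∀ i j, i ≠ j → Bt i j ≤ 0 := by
      intro i j hij
      simp only [hBt, Matrix.of_apply, if_neg hij]
      exact mul_nonpos_of_nonneg_of_nonpos ht.1 (hZ i j hij)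
    have hBtdiag : ∀ i, 0 < Bt i i := by
      intro i; simpa [hBt] using hdiag i
    have hBtN : IsNekrasov Bt := by
      intro i
      have hmono : nekH Bt i ≤ nekH B i := by
        refine nekH_mono B Bt (fun j => diag_norm_pos hN j) (fun j => by simp [hBt])
          (fun i j hij => ?_) i
        simp only [hBt, Matrix.of_apply, if_neg hij]
        rw [norm_mul]
        calc ‖t‖ * ‖B i j‖ ≤ 1 * ‖B i j‖ := by
              refine mul_le_mul_of_nonneg_right ?_ (norm_nonneg _)
              rw [Real.norm_eq_abs, abs_of_nonneg ht.1]; exact ht.2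
          _ = ‖B i j‖ := one_mul _
      calc nekH Bt i ≤ nekH B i := hmono
        _ < ‖B i i‖ := hN i
        _ = ‖Bt i i‖ := by simp [hBt]
    have hmv' : ∀ i, Bt.mulVec v i + (∑ j, v j) * (t * c i) = 0 := by
      intro i
      have := congrFun hmv i
      simp only [Matrix.mulVec, dotProduct, hG, Matrix.of_apply, Pi.zero_apply] at this ⊢
      rw [Finset.sum_mul, ← this, ← Finset.sum_add_distrib]
      refine Finset.sum_congr rfl fun j _ => ?_
      simp only [hBt, Matrix.of_apply]
      ring
    have := bnek_mulVec_zero Bt hBtZ hBtdiag hBtN (fun i => t * c i)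
      (fun i => mul_nonneg ht.1 (hc i)) v hmv'
    exact hv this
  have hG1 : G 1 = Matrix.of fun i j => B i j + c i := by
    ext i j
    rcases eq_or_ne i j with rfl | hne
    · simp [hG]
    · simp [hG, hne]
  have hf1 : 0 < (G 1).det := by
    by_contra hle
    push_neg at hle
    have h1ne := hne 1 (Set.mem_Icc.mpr ⟨zero_le_one, le_rfl⟩)
    have hlt : (G 1).det < 0 := lt_of_le_of_ne hle h1ne
    have hsub := intermediate_value_Icc' (zero_le_one (α := ℝ)) hcont.continuousOn
    have h0mem : (0:ℝ) ∈ Set.Icc ((G 1).det) ((G 0).det) := ⟨hlt.le, hf0.le⟩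
    obtain ⟨tz, htz, htz0⟩ := hsub h0mem
    exact hne tz htz htz0
  rwa [hG1] at hf1

theorem rPlus_nonneg {n : ℕ} (M : Matrix (Fin n) (Fin n) ℝ) (i : Fin n) : 0 ≤ rPlus M i := by
  unfold rPlus
  exact (Finset.le_fold_max _).mpr (Or.inl le_rfl)

theorem le_rPlus {n : ℕ} (M : Matrix (Fin n) (Fin n) ℝ) {i j : Fin n} (h : j ≠ i) :
    M i j ≤ rPlus M i := by
  unfold rPlus
  exact (Finset.le_fold_max _).mpr (Or.inr ⟨j, Finset.mem_erase.mpr ⟨h, mem_univ _⟩, le_rfl⟩)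

theorem rPlus_le {n : ℕ} (M : Matrix (Fin n) (Fin n) ℝ) {i : Fin n} {r : ℝ} (h0 : 0 ≤ r)
    (h : ∀ j, j ≠ i → M i j ≤ r) : rPlus M i ≤ r := by
  unfold rPlus
  exact (Finset.fold_max_le _).mpr ⟨h0, fun j hj => h j (Finset.mem_erase.mp hj).1⟩

theorem stmt13 {n : ℕ} (M : Matrix (Fin n) (Fin n) ℝ) (hBN : IsBNekrasov M) :
    IsPMatrix M := by
  intro S
  set m := S.card with hm
  set φ : Fin m ≃o ↥S := S.orderIsoOfFin rfl with hφ
  set e : Fin m → Fin n := fun k => ((φ k : ↥S) : Fin n) with he_def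
  have he : StrictMono e := fun a b hab => by
    have := φ.strictMono hab
    exact this
  set N : Matrix (Fin m) (Fin m) ℝ := M.submatrix e e with hN
  have hdet : (M.submatrix (fun i : S => (i : Fin n)) (fun j : S => (j : Fin n))).det = N.det := by
    have : M.submatrix (fun i : S => (i : Fin n)) (fun j : S => (j : Fin n))
        = N.submatrix φ.symm φ.symm := by
      ext a b
      simp [hN, he_def, Matrix.submatrix_apply]
    rw [this]
    exact Matrix.det_submatrix_equiv_self φ.symm.toEquiv N
  rw [hdet]
  -- properties of BPlus N
  have hNij : ∀ i j, N i j = M (e i) (e j) := fun i j => rfl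
  have hrle : ∀ i, rPlus N i ≤ rPlus M (e i) := by
    intro i
    refine rPlus_le N (rPlus_nonneg M (e i)) fun j hj => ?_
    exact le_rPlus M (fun hh => hj (he.injective hh))
  have hBdiagM : ∀ i, 0 < BPlus M i i := hBN.2
  have hBdiag' : ∀ i, BPlus M (e i) (e i) ≤ BPlus N i i := by
    intro i
    simp only [BPlus, Matrix.of_apply, hNij]
    linarith [hrle i]
  have hBNdiag : ∀ i, 0 < BPlus N i i := fun i => lt_of_lt_of_le (hBdiagM (e i)) (hBdiag' i)
  have hBNoff : ∀ i j, i ≠ j → BPlus N i j ≤ 0 := by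
    intro i j hij
    simp only [BPlus, Matrix.of_apply]
    linarith [le_rPlus N (Ne.symm hij) (i := i)]
  have hBMoff : ∀ i j, i ≠ j → BPlus M i j ≤ 0 := by
    intro i j hij
    simp only [BPlus, Matrix.of_apply]
    linarith [le_rPlus M (Ne.symm hij) (i := i)]
  have hoffnorm : ∀ i j, i ≠ j → ‖BPlus N i j‖ ≤ ‖(BPlus M).submatrix e e i j‖ := by
    intro i j hij
    have h1 : BPlus N i j ≤ 0 := hBNoff i j hij
    have h2 : BPlus M (e i) (e j) ≤ 0 :=
      hBMoff (e i) (e j) fun hh => hij (he.injective hh)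
    rw [Matrix.submatrix_apply, Real.norm_eq_abs, Real.norm_eq_abs, abs_of_nonpos h1,
      abs_of_nonpos h2]
    simp only [BPlus, Matrix.of_apply, hNij, neg_sub]
    linarith [hrle i]
  have hdiagnorm : ∀ j, 0 < ‖(BPlus M).submatrix e e j j‖ ∧
      ‖(BPlus M).submatrix e e j j‖ ≤ ‖BPlus N j j‖ := by
    intro j
    rw [Matrix.submatrix_apply, Real.norm_eq_abs, Real.norm_eq_abs,
      abs_of_pos (hBdiagM (e j)), abs_of_pos (hBNdiag j)]
    exact ⟨hBdiagM (e j), hBdiag' j⟩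
  have hBNnek : IsNekrasov (BPlus N) := by
    intro k
    have step1 : nekH (BPlus N) k ≤ nekH ((BPlus M).submatrix e e) k :=
      nekH_mono ((BPlus M).submatrix e e) (BPlus N)
        (fun j => (hdiagnorm j).1) (fun j => (hdiagnorm j).2) hoffnorm k
    have step2 : nekH ((BPlus M).submatrix e e) k ≤ nekH (BPlus M) (e k) :=
      nekH_submatrix (BPlus M) e he k
    have step3 : nekH (BPlus M) (e k) < ‖BPlus M (e k) (e k)‖ := hBN.1 (e k)
    have step4 : ‖BPlus M (e k) (e k)‖ ≤ ‖BPlus N k k‖ := by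
      have := (hdiagnorm k).2
      rwa [Matrix.submatrix_apply] at this
    linarith
  have hfinal := bnek_det_pos (BPlus N) hBNoff hBNdiag hBNnek (rPlus N) (rPlus_nonneg N)
  have : (Matrix.of fun i j => BPlus N i j + rPlus N i) = N := by
    ext i j
    simp [BPlus]
  rwa [this] at hfinal
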